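/- Let F̃ : ℝ^m → ℝ be continuously differentiable with L-Lipschitz gradient and F̃(z_k) ≥ F̃_inf for all k, where (z_k) is generated by z_{k+1} = z_k + t_k s_k. Suppose the inexact direction conditions hold: c₁'‖∇̄F̃(z_k)‖₂² ≤ −⟨∇̄F̃(z_k), s_k⟩ and ‖s_k‖₂ ≤ c₂'‖∇̄F̃(z_k)‖₂ with c₁', c₂' > 0, together with the directional error tolerance ‖∇̄F̃(z_k) − ∇F̃(z_k)‖₂ ≤ ζ‖∇̄F̃(z_k)‖₂ for ζ ∈ [0, c₁'/c₂'). Set c₁ = (c₁' − ζc₂')/(1+ζ)² and c₂ = c₂'/(1−ζ), and suppose the step sizes satisfy t_k ∈ [t̄, (2c₁ − γ)/(c₂²L)] for all k, where t̄ > 0 and γ > 0 with t̄ ≤ (2c₁ − γ)/(c₂²L). Then both ∇F̃(z_k) → 0 and ∇̄F̃(z_k) → 0 as k → ∞, and every limit point of (z_k) is a stationary point of F̃. -/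

import Mathlib

open Filter
open scoped RealInnerProductSpace

private lemma grad_cont {m : ℕ} (F : EuclideanSpace ℝ (Fin m) → ℝ)
    (hF : ContDiff ℝ 1 F) : Continuous (gradient F) := by
  have h := hF.continuous_fderiv one_ne_zero
  exact ((InnerProductSpace.toDual ℝ (EuclideanSpace ℝ (Fin m))).symm.continuous).comp h

private lemma descent_lemma {m : ℕ} (F : EuclideanSpace ℝ (Fin m) → ℝ) (L : ℝ)
    (hF : ContDiff ℝ 1 F)
    (hL : ∀ x y, ‖gradient F x - gradient F y‖ ≤ L * ‖x - y‖)
    (x v : EuclideanSpace ℝ (Fin m)) :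
    F (x + v) ≤ F x + ⟪gradient F x, v⟫ + L / 2 * ‖v‖ ^ 2 := by
  have hdiff : Differentiable ℝ F := hF.differentiable one_ne_zero
  have hgc : Continuous (gradient F) := grad_cont F hF
  set g' : ℝ → ℝ := fun τ => ⟪gradient F (x + τ • v), v⟫ with hg'
  have hderiv : ∀ τ : ℝ, HasDerivAt (fun τ : ℝ => F (x + τ • v)) (g' τ) τ := by
    intro τ
    have h1 : HasDerivAt (fun τ : ℝ => x + τ • v) v τ := by
      simpa using ((hasDerivAt_id τ).smul_const v).const_add x
    have h2 : HasFDerivAt F (fderiv ℝ F (x + τ • v)) (x + τ • v) := (hdiff _).hasFDerivAt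
    have h3 := h2.comp_hasDerivAt τ h1
    convert h3 using 1
    show ⟪gradient F (x + τ • v), v⟫ = fderiv ℝ F (x + τ • v) v
    rw [gradient]
    exact InnerProductSpace.toDual_symm_apply
    all_goals rfl
  have hccurve : Continuous fun τ : ℝ => x + τ • v := by continuity
  have hcont : Continuous g' := (hgc.comp hccurve).inner continuous_const
  have hint : ∫ τ in (0:ℝ)..1, g' τ = F (x + v) - F x := by
    have h := intervalIntegral.integral_eq_sub_of_hasDerivAt
      (f := fun τ : ℝ => F (x + τ • v)) (f' := g')
      (fun τ _ => hderiv τ) (hcont.intervalIntegrable 0 1)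
    simpa using h
  have hbound : ∀ τ ∈ Set.Icc (0:ℝ) 1, g' τ ≤ ⟪gradient F x, v⟫ + L * ‖v‖ ^ 2 * τ := by
    intro τ hτ
    have h3 : g' τ - ⟪gradient F x, v⟫ = ⟪gradient F (x + τ • v) - gradient F x, v⟫ := by
      rw [inner_sub_left]
    have h4 : ⟪gradient F (x + τ • v) - gradient F x, v⟫
        ≤ ‖gradient F (x + τ • v) - gradient F x‖ * ‖v‖ := real_inner_le_norm _ _
    have h5 : ‖gradient F (x + τ • v) - gradient F x‖ ≤ L * (τ * ‖v‖) := by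
      have h := hL (x + τ • v) x
      simpa [norm_smul, abs_of_nonneg hτ.1] using h
    nlinarith [norm_nonneg v, norm_nonneg (gradient F (x + τ • v) - gradient F x)]
  have hibd : ∫ τ in (0:ℝ)..1, g' τ
      ≤ ∫ τ in (0:ℝ)..1, (⟪gradient F x, v⟫ + L * ‖v‖ ^ 2 * τ) := by
    apply intervalIntegral.integral_mono_on zero_le_one (hcont.intervalIntegrable 0 1)
    · exact ((continuous_const.add (continuous_const.mul continuous_id)).intervalIntegrable 0 1)
    · exact hbound
  have hval : ∫ τ in (0:ℝ)..1, (⟪gradient F x, v⟫ + L * ‖v‖ ^ 2 * τ)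
      = ⟪gradient F x, v⟫ + L / 2 * ‖v‖ ^ 2 := by
    have hI : IntervalIntegrable (fun τ : ℝ => L * ‖v‖ ^ 2 * τ) MeasureTheory.volume 0 1 :=
      (continuous_const.mul continuous_id).intervalIntegrable 0 1
    rw [intervalIntegral.integral_add intervalIntegrable_const hI]
    have h2 : ∫ τ in (0:ℝ)..1, L * ‖v‖ ^ 2 * τ = L * ‖v‖ ^ 2 * ((1:ℝ) ^ 2 / 2 - 0 ^ 2 / 2) := by
      rw [intervalIntegral.integral_const_mul]
      congr 1
      simpa using integral_id (a := (0:ℝ)) (b := 1)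
    rw [h2]
    simp
    ring
  linarith [hibd, hint ▸ hibd.trans_eq hval]

set_option maxHeartbeats 1000000 in
theorem stmt18 {m : ℕ} (F : EuclideanSpace ℝ (Fin m) → ℝ) (L : ℝ)
    (hF : ContDiff ℝ 1 F)
    (hL : ∀ x y, ‖gradient F x - gradient F y‖ ≤ L * ‖x - y‖)
    (Finf : ℝ) (z s gbar : ℕ → EuclideanSpace ℝ (Fin m)) (t : ℕ → ℝ)
    (hlow : ∀ k, Finf ≤ F (z k))
    (hiter : ∀ k, z (k + 1) = z k + t k • s k)
    (c₁' c₂' ζ : ℝ) (hc₁' : 0 < c₁') (hc₂' : 0 < c₂')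
    (hζ : 0 ≤ ζ) (hζlt : ζ < c₁' / c₂')
    (h₁ : ∀ k, c₁' * ‖gbar k‖ ^ 2 ≤ -⟪gbar k, s k⟫)
    (h₂ : ∀ k, ‖s k‖ ≤ c₂' * ‖gbar k‖)
    (herr : ∀ k, ‖gbar k - gradient F (z k)‖ ≤ ζ * ‖gbar k‖)
    (c₁ c₂ : ℝ) (hc₁ : c₁ = (c₁' - ζ * c₂') / (1 + ζ) ^ 2)
    (hc₂ : c₂ = c₂' / (1 - ζ))
    (tbar γ : ℝ) (htbar : 0 < tbar) (hγ : 0 < γ)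
    (htle : tbar ≤ (2 * c₁ - γ) / (c₂ ^ 2 * L))
    (hstep : ∀ k, t k ∈ Set.Icc tbar ((2 * c₁ - γ) / (c₂ ^ 2 * L))) :
    Tendsto (fun k => gradient F (z k)) atTop (nhds 0) ∧
      Tendsto gbar atTop (nhds 0) ∧
      ∀ zstar : EuclideanSpace ℝ (Fin m),
        (∃ φ : ℕ → ℕ, StrictMono φ ∧ Tendsto (z ∘ φ) atTop (nhds zstar)) →
        gradient F zstar = 0 := by
  rcases eq_or_ne m 0 with hm | hm
  · subst hm
    have h0 : ∀ x : EuclideanSpace ℝ (Fin 0), x = 0 := fun x => Subsingleton.elim x 0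
    refine ⟨?_, ?_, fun zstar _ => h0 _⟩
    · simpa [show (fun k => gradient F (z k)) = fun _ => (0 : EuclideanSpace ℝ (Fin 0)) from
        funext fun k => h0 _] using (tendsto_const_nhds : Tendsto (fun _ : ℕ => (0 : EuclideanSpace ℝ (Fin 0))) atTop (nhds 0))
    · simpa [show gbar = fun _ => (0 : EuclideanSpace ℝ (Fin 0)) from funext fun k => h0 _]
        using (tendsto_const_nhds : Tendsto (fun _ : ℕ => (0 : EuclideanSpace ℝ (Fin 0))) atTop (nhds 0))
  -- main case
  haveI : Nonempty (Fin m) := ⟨⟨0, Nat.pos_of_ne_zero hm⟩⟩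
  have hL0 : 0 ≤ L := by
    have h := hL (EuclideanSpace.single (Classical.arbitrary (Fin m)) (1:ℝ)) 0
    have hn : ‖EuclideanSpace.single (Classical.arbitrary (Fin m)) (1:ℝ) - 0‖ = 1 := by
      simp [EuclideanSpace.norm_single]
    rw [hn, mul_one] at h
    exact le_trans (norm_nonneg _) h
  have hden : 0 < c₂ ^ 2 * L := by
    rcases lt_or_ge 0 (c₂ ^ 2 * L) with h | h
    · exact h
    · have hge : 0 ≤ c₂ ^ 2 * L := mul_nonneg (sq_nonneg _) hL0
      have h0 : c₂ ^ 2 * L = 0 := le_antisymm h hge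
      rw [h0, div_zero] at htle
      linarith
  have hLpos : 0 < L := by
    rcases lt_or_ge 0 L with h | h
    · exact h
    · nlinarith [sq_nonneg c₂]
  have hc₂ne : c₂ ≠ 0 := by
    intro h; rw [h] at hden; simp at hden
  have hζ1 : (1 : ℝ) - ζ ≠ 0 := by
    intro h
    rw [hc₂, h, div_zero] at hc₂ne
    exact hc₂ne rfl
  have hnum : 0 < 2 * c₁ - γ := by
    have h2 : 0 < (2 * c₁ - γ) / (c₂ ^ 2 * L) := lt_of_lt_of_le htbar htle
    have h3 := mul_pos h2 hden
    rwa [div_mul_cancel₀ _ (ne_of_gt hden)] at h3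
  have hD : 0 < c₁' - ζ * c₂' := by
    have := (lt_div_iff₀ hc₂').mp hζlt
    linarith
  have hc₂sq : c₂' ^ 2 = c₂ ^ 2 * (1 - ζ) ^ 2 := by
    rw [hc₂, div_pow, div_mul_cancel₀]
    exact pow_ne_zero 2 hζ1
  set δ : ℝ := tbar * (γ / 2) * (1 - ζ) ^ 2 with hδdef
  have hδ : 0 < δ := by
    have := sq_pos_of_ne_zero hζ1
    positivity
  -- per-step decrement
  have hdec : ∀ k, δ * ‖gbar k‖ ^ 2 ≤ F (z k) - F (z (k + 1)) := by
    intro k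
    have hs1 := h₁ k
    have hs2 := h₂ k
    have he := herr k
    have htk := hstep k
    obtain ⟨htk1, htk2⟩ := htk
    have htpos : 0 < t k := lt_of_lt_of_le htbar htk1
    have hgn : (0:ℝ) ≤ ‖gbar k‖ := norm_nonneg _
    have hsn : (0:ℝ) ≤ ‖s k‖ := norm_nonneg _
    -- inner product bound with true gradient
    have hGs : ⟪gradient F (z k), s k⟫ ≤ -(c₁' - ζ * c₂') * ‖gbar k‖ ^ 2 := by
      have e1 : ⟪gradient F (z k), s k⟫
          = ⟪gbar k, s k⟫ - ⟪gbar k - gradient F (z k), s k⟫ := by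
        rw [inner_sub_left]; ring
      have e2 : |⟪gbar k - gradient F (z k), s k⟫|
          ≤ ‖gbar k - gradient F (z k)‖ * ‖s k‖ := abs_real_inner_le_norm _ _
      have e3 := abs_le.mp e2
      have e4 : ‖gbar k - gradient F (z k)‖ * ‖s k‖ ≤ (ζ * ‖gbar k‖) * (c₂' * ‖gbar k‖) := by
        apply mul_le_mul he hs2 hsn (mul_nonneg hζ hgn)
      have e5 : -(‖gbar k - gradient F (z k)‖ * ‖s k‖) ≤ ⟪gbar k - gradient F (z k), s k⟫ := e3.1
      have e6 : (ζ * ‖gbar k‖) * (c₂' * ‖gbar k‖) = ζ * c₂' * ‖gbar k‖ ^ 2 := by ring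
      have e7 : -(c₁' - ζ * c₂') * ‖gbar k‖ ^ 2 = -(c₁' * ‖gbar k‖ ^ 2) + ζ * c₂' * ‖gbar k‖ ^ 2 := by ring
      linarith
    -- descent lemma
    have hdesc := descent_lemma F L hF hL (z k) (t k • s k)
    rw [← hiter k] at hdesc
    rw [real_inner_smul_right] at hdesc
    have hns : ‖t k • s k‖ ^ 2 = t k ^ 2 * ‖s k‖ ^ 2 := by
      rw [norm_smul, mul_pow, Real.norm_eq_abs, sq_abs]
    rw [hns] at hdesc
    -- bound ‖s‖² by c₂'²‖gbar‖²
    have hs2sq : ‖s k‖ ^ 2 ≤ c₂' ^ 2 * ‖gbar k‖ ^ 2 := by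
      nlinarith [mul_le_mul hs2 hs2 hsn (by positivity : (0:ℝ) ≤ c₂' * ‖gbar k‖)]
    -- key bound on coefficient
    have hkey : -(c₁' - ζ * c₂') + L / 2 * t k * c₂' ^ 2 ≤ -(γ / 2) * (1 - ζ) ^ 2 := by
      have hR : (2 * c₁ - γ) / (c₂ ^ 2 * L) * (c₂ ^ 2 * L) = 2 * c₁ - γ :=
        div_mul_cancel₀ _ (ne_of_gt hden)
      have h5 : L / 2 * t k * c₂' ^ 2 ≤ L / 2 * ((2 * c₁ - γ) / (c₂ ^ 2 * L)) * c₂' ^ 2 := by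
        have hnn : 0 ≤ L / 2 * c₂' ^ 2 := by positivity
        have := mul_le_mul_of_nonneg_left htk2 hnn
        nlinarith
      have h6 : L / 2 * ((2 * c₁ - γ) / (c₂ ^ 2 * L)) * c₂' ^ 2
          = (2 * c₁ - γ) * (1 - ζ) ^ 2 / 2 := by
        rw [hc₂sq]
        field_simp
      have h7 : c₁ * (1 - ζ) ^ 2 ≤ c₁' - ζ * c₂' := by
        rw [hc₁]
        rw [div_mul_eq_mul_div, div_le_iff₀ (by positivity : (0:ℝ) < (1 + ζ) ^ 2)]
        nlinarith [mul_nonneg (mul_nonneg hD.le hζ) hζ, mul_nonneg hD.le hζ]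
      linarith [h5.trans_eq h6]
    -- put it together
    have hfin : F (z (k + 1)) - F (z k) ≤ t k * (-(c₁' - ζ * c₂') + L / 2 * t k * c₂' ^ 2) * ‖gbar k‖ ^ 2 := by
      have h8 : t k * ⟪gradient F (z k), s k⟫ ≤ t k * (-(c₁' - ζ * c₂') * ‖gbar k‖ ^ 2) :=
        mul_le_mul_of_nonneg_left hGs htpos.le
      have h9 : L / 2 * (t k ^ 2 * ‖s k‖ ^ 2) ≤ L / 2 * (t k ^ 2 * (c₂' ^ 2 * ‖gbar k‖ ^ 2)) :=
        mul_le_mul_of_nonneg_left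
          (mul_le_mul_of_nonneg_left hs2sq (sq_nonneg (t k))) (by positivity)
      have heq : t k * (-(c₁' - ζ * c₂') * ‖gbar k‖ ^ 2)
          + L / 2 * (t k ^ 2 * (c₂' ^ 2 * ‖gbar k‖ ^ 2))
          = t k * (-(c₁' - ζ * c₂') + L / 2 * t k * c₂' ^ 2) * ‖gbar k‖ ^ 2 := by ring
      linarith
    have h10 : t k * (-(c₁' - ζ * c₂') + L / 2 * t k * c₂' ^ 2) * ‖gbar k‖ ^ 2
        ≤ -δ * ‖gbar k‖ ^ 2 := by
      have hcoef : t k * (-(c₁' - ζ * c₂') + L / 2 * t k * c₂' ^ 2) ≤ -δ := by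
        have h11 : t k * (-(c₁' - ζ * c₂') + L / 2 * t k * c₂' ^ 2)
            ≤ t k * (-(γ / 2) * (1 - ζ) ^ 2) := mul_le_mul_of_nonneg_left hkey htpos.le
        have h12 : t k * (-(γ / 2) * (1 - ζ) ^ 2) ≤ tbar * (-(γ / 2) * (1 - ζ) ^ 2) := by
          have hneg : -(γ / 2) * (1 - ζ) ^ 2 ≤ 0 := by
            have := sq_nonneg (1 - ζ); nlinarith
          nlinarith
        have : tbar * (-(γ / 2) * (1 - ζ) ^ 2) = -δ := by rw [hδdef]; ring
        linarith
      exact mul_le_mul_of_nonneg_right hcoef (sq_nonneg _)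
    linarith [hfin.trans h10]
  -- summability
  have hsum : ∀ n, ∑ k ∈ Finset.range n, ‖gbar k‖ ^ 2 ≤ (F (z 0) - Finf) / δ := by
    intro n
    have h1 : ∑ k ∈ Finset.range n, (F (z k) - F (z (k + 1))) = F (z 0) - F (z n) :=
      Finset.sum_range_sub' (fun k => F (z k)) n
    have h2 : δ * ∑ k ∈ Finset.range n, ‖gbar k‖ ^ 2 ≤ F (z 0) - F (z n) := by
      rw [Finset.mul_sum, ← h1]
      exact Finset.sum_le_sum fun k _ => hdec k
    rw [le_div_iff₀ hδ]
    have := hlow n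
    linarith [h2]
  have hS : Summable fun k => ‖gbar k‖ ^ 2 :=
    summable_of_sum_range_le (fun n => sq_nonneg _) hsum
  have h0 : Tendsto (fun k => ‖gbar k‖ ^ 2) atTop (nhds 0) := hS.tendsto_atTop_zero
  have hgnorm : Tendsto (fun k => ‖gbar k‖) atTop (nhds 0) := by
    have h' := (Real.continuous_sqrt.tendsto 0).comp h0
    have he : (fun k => Real.sqrt (‖gbar k‖ ^ 2)) = fun k => ‖gbar k‖ :=
      funext fun k => Real.sqrt_sq (norm_nonneg _)
    rwa [Function.comp_def, he, Real.sqrt_zero] at h'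
  have hgbar : Tendsto gbar atTop (nhds 0) := by
    rw [tendsto_zero_iff_norm_tendsto_zero]; exact hgnorm
  have hgradnorm : Tendsto (fun k => ‖gradient F (z k)‖) atTop (nhds 0) := by
    apply squeeze_zero (fun k => norm_nonneg _) (g := fun k => (1 + ζ) * ‖gbar k‖)
    · intro k
      have h1 : ‖gradient F (z k)‖ ≤ ‖gbar k‖ + ‖gbar k - gradient F (z k)‖ := by
        simpa using norm_sub_le (gbar k) (gbar k - gradient F (z k))
      have := herr k
      linarith [h1, this, (by ring : (1 + ζ) * ‖gbar k‖ = ‖gbar k‖ + ζ * ‖gbar k‖)]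
    · have := hgnorm.const_mul (1 + ζ)
      simpa using this
  have hgrad : Tendsto (fun k => gradient F (z k)) atTop (nhds 0) := by
    rw [tendsto_zero_iff_norm_tendsto_zero]; exact hgradnorm
  refine ⟨hgrad, hgbar, ?_⟩
  rintro zstar ⟨φ, hφ, hzφ⟩
  have hc : Continuous (gradient F) := grad_cont F hF
  have h1 : Tendsto (fun n => gradient F (z (φ n))) atTop (nhds (gradient F zstar)) :=
    (hc.tendsto zstar).comp hzφ
  have h2 : Tendsto (fun n => gradient F (z (φ n))) atTop (nhds 0) :=
    hgrad.comp hφ.tendsto_atTop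
  exact tendsto_nhds_unique h1 h2
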